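/- Let L be a lattice of signature (2,n), let w ∈ L⊗ℂ satisfy (w,w) = 0 and (w,w̄) > 0, and set S = {x ∈ L : (x,w) = 0 and (x,w̄) = 0} and T = {x ∈ L : (x,s) = 0 for all s ∈ S}. Then (S⊗ℂ) ∩ (T⊗ℂ) = {0} as subspaces of L⊗ℂ. -/

import Mathlib

namespace A0607339

/-- Extension of scalars `ℤ → ℂ` for integer vectors. -/
def toC (ι : Type) [Fintype ι] : (ι → ℤ) →ₗ[ℤ] (ι → ℂ) where
  toFun v i := (v i : ℂ)
  map_add' u v := by funext i; simp
  map_smul' c v := by funext i; simp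

/-- The `ℤ`-valued bilinear form attached to a Gram matrix `G`. -/
def bZ {ι : Type} [Fintype ι] (G : Matrix ι ι ℤ) (x y : ι → ℤ) : ℤ :=
  dotProduct x (Matrix.mulVec G y)

/-- The `ℂ`-bilinear extension of the form attached to a Gram matrix `G`. -/
noncomputable def bC {ι : Type} [Fintype ι] (G : Matrix ι ι ℤ) (x y : ι → ℂ) : ℂ :=
  dotProduct x (Matrix.mulVec (G.map (Int.cast : ℤ → ℂ)) y)

/-- The Gram matrix `G` has `p` positive and `q` negative squares in a real
diagonalization, i.e. the lattice has signature `(p,q)`. -/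
def HasSignature {ι : Type} [Fintype ι] [DecidableEq ι] (G : Matrix ι ι ℤ) (p q : ℕ) : Prop :=
  ∃ (P : Matrix ι ι ℝ) (d : ι → ℝ), IsUnit P.det ∧
    Matrix.transpose P * G.map (Int.cast : ℤ → ℝ) * P = Matrix.diagonal d ∧
    Nat.card {i // 0 < d i} = p ∧ Nat.card {i // d i < 0} = q

set_option linter.unusedSectionVars false

noncomputable def bR {ι : Type} [Fintype ι] (G : Matrix ι ι ℤ) (x y : ι → ℝ) : ℝ :=
  dotProduct x (Matrix.mulVec (G.map (Int.cast : ℤ → ℝ)) y)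

noncomputable def cplx {ι : Type} (x : ι → ℝ) : ι → ℂ := fun i => (x i : ℂ)

section Helpers

variable {ι : Type} [Fintype ι] (G : Matrix ι ι ℤ)

lemma bC_add_left (x y z : ι → ℂ) : bC G (x + y) z = bC G x z + bC G y z := by
  simp [bC, add_dotProduct]

lemma bC_add_right (x y z : ι → ℂ) : bC G x (y + z) = bC G x y + bC G x z := by
  simp [bC, Matrix.mulVec_add, dotProduct_add]

lemma bC_sub_right (x y z : ι → ℂ) : bC G x (y - z) = bC G x y - bC G x z := by
  simp [bC, Matrix.mulVec_sub, dotProduct_sub]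

lemma bC_smul_left (c : ℂ) (x z : ι → ℂ) : bC G (c • x) z = c * bC G x z := by
  simp [bC, smul_dotProduct]

lemma bC_smul_right (c : ℂ) (x z : ι → ℂ) : bC G x (c • z) = c * bC G x z := by
  simp [bC, Matrix.mulVec_smul, dotProduct_smul]

lemma bC_cplx (x y : ι → ℝ) : bC G (cplx x) (cplx y) = (bR G x y : ℝ) := by
  simp [bC, bR, cplx, dotProduct, Matrix.mulVec, Matrix.map_apply]

lemma bC_toC (x y : ι → ℤ) : bC G (toC ι x) (toC ι y) = ((bZ G x y : ℤ) : ℂ) := by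
  simp [bC, bZ, toC, dotProduct, Matrix.mulVec, Matrix.map_apply]

lemma bR_symm (hsym : G.IsSymm) (x y : ι → ℝ) : bR G x y = bR G y x := by
  simp only [bR, dotProduct, Matrix.mulVec, Matrix.map_apply, Finset.mul_sum]
  rw [Finset.sum_comm]
  refine Finset.sum_congr rfl fun i _ => Finset.sum_congr rfl fun j _ => ?_
  rw [hsym.apply i j]
  ring

lemma decompC (v : ι → ℂ) :
    v = cplx (fun i => (v i).re) + Complex.I • cplx (fun i => (v i).im) := by
  funext i
  simp [cplx, Complex.ext_iff]

lemma starC (v : ι → ℂ) :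
    star v = cplx (fun i => (v i).re) - Complex.I • cplx (fun i => (v i).im) := by
  funext i
  simp [cplx, Complex.ext_iff]

lemma bC_expand1 (p q a b : ι → ℝ) :
    bC G (cplx p + Complex.I • cplx q) (cplx a + Complex.I • cplx b)
      = ((bR G p a - bR G q b : ℝ) : ℂ) + ((bR G p b + bR G q a : ℝ) : ℂ) * Complex.I := by
  simp only [bC_add_left, bC_add_right, bC_smul_left, bC_smul_right, bC_cplx]
  apply Complex.ext <;> simp <;> ring

lemma bC_expand2 (p q a b : ι → ℝ) :
    bC G (cplx p + Complex.I • cplx q) (cplx a - Complex.I • cplx b)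
      = ((bR G p a + bR G q b : ℝ) : ℂ) + ((- bR G p b + bR G q a : ℝ) : ℂ) * Complex.I := by
  simp only [bC_sub_right, bC_add_left, bC_smul_left, bC_smul_right, bC_cplx]
  apply Complex.ext <;> simp <;> ring

lemma reim_eq (X Y Z : ℝ) (h : (X : ℂ) + (Y : ℂ) * Complex.I = (Z : ℂ)) : X = Z ∧ Y = 0 := by
  have := Complex.ext_iff.mp h
  simpa using this

end Helpers

open Finset in
set_option maxHeartbeats 2000000 in
lemma key (n : ℕ) (d : Fin (n+2) → ℝ)
    (hpos : Nat.card {i // 0 < d i} = 2) (hneg : Nat.card {i // d i < 0} = n)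
    (a b : Fin (n+2) → ℝ) (t : ℝ) (ht : 0 < t)
    (haa : ∑ i, d i * a i * a i = t/2) (hbb : ∑ i, d i * b i * b i = t/2)
    (hab : ∑ i, d i * a i * b i = 0)
    (x : Fin (n+2) → ℝ) (hxa : ∑ i, d i * x i * a i = 0) (hxb : ∑ i, d i * x i * b i = 0) :
    ∑ i, d i * x i * x i ≤ 0 ∧ ((∑ i, d i * x i * x i) = 0 → x = 0) := by
  classical
  -- trichotomy
  have hposF : #(univ.filter fun i => 0 < d i) = 2 := by
    rw [Nat.card_eq_fintype_card, Fintype.card_subtype] at hpos; exact hpos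
  have hnegF : #(univ.filter fun i => d i < 0) = n := by
    rw [Nat.card_eq_fintype_card, Fintype.card_subtype] at hneg; exact hneg
  have hcompl : #(univ.filter fun i => ¬ 0 < d i) = n := by
    have h := card_filter_add_card_filter_not (s := (univ : Finset (Fin (n+2))))
      (fun i => 0 < d i)
    simp only [card_univ, Fintype.card_fin] at h
    omega
  have hsub : (univ.filter fun i => d i < 0) ⊆ (univ.filter fun i => ¬ 0 < d i) := by
    intro i hi
    simp only [mem_filter, mem_univ, true_and] at hi ⊢
    exact not_lt.mpr (le_of_lt hi)
  have heqF : (univ.filter fun i => d i < 0) = (univ.filter fun i => ¬ 0 < d i) :=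
    Finset.eq_of_subset_of_card_le hsub (by omega)
  have trich : ∀ i, 0 < d i ∨ d i < 0 := by
    intro i
    by_cases h : 0 < d i
    · exact Or.inl h
    · right
      have : i ∈ univ.filter fun i => ¬ 0 < d i := by
        simp only [mem_filter, mem_univ, true_and]; exact h
      rw [← heqF] at this
      simp only [mem_filter, mem_univ, true_and] at this
      exact this
  -- expansion helper
  have expand : ∀ c0 c1 : ℝ, ∑ i, d i * (c0 * a i + c1 * b i) * (c0 * a i + c1 * b i)
      = (c0^2 + c1^2) * (t/2) := by
    intro c0 c1
    have : ∑ i, d i * (c0 * a i + c1 * b i) * (c0 * a i + c1 * b i)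
        = c0^2 * (∑ i, d i * a i * a i) + (2*c0*c1) * (∑ i, d i * a i * b i)
          + c1^2 * (∑ i, d i * b i * b i) := by
      simp only [Finset.mul_sum, ← Finset.sum_add_distrib]
      exact Finset.sum_congr rfl fun i _ => by ring
    rw [this, haa, hbb, hab]; ring
  -- the positive-coordinate space
  set K := {i // 0 < d i} with hK
  have hcardK : Fintype.card K = 2 := by rw [← Nat.card_eq_fintype_card]; exact hpos
  -- the linear map
  let f : (Fin 2 → ℝ) →ₗ[ℝ] (K → ℝ) :=
    { toFun := fun c => fun i => c 0 * a i.1 + c 1 * b i.1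
      map_add' := fun c c' => by funext i; simp; ring
      map_smul' := fun r c => by funext i; simp; ring }
  -- nonpositivity of Q on vectors vanishing on positive coordinates
  have Qnonpos : ∀ u : Fin (n+2) → ℝ, (∀ i, 0 < d i → u i = 0) →
      (∑ i, d i * u i * u i ≤ 0) ∧ ((∑ i, d i * u i * u i) = 0 → u = 0) := by
    intro u hu
    have hterm : ∀ i : Fin (n+2), i ∈ univ → d i * u i * u i ≤ 0 := by
      intro i _
      rcases trich i with h | h
      · rw [hu i h]; simp
      · nlinarith [sq_nonneg (u i)]
    constructor
    · exact Finset.sum_nonpos hterm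
    · intro h0
      have := (Finset.sum_eq_zero_iff_of_nonpos hterm).mp h0
      funext i
      show u i = 0
      rcases trich i with h | h
      · exact hu i h
      · have hi := this i (mem_univ i)
        have hd : d i ≠ 0 := ne_of_lt h
        have h2 : d i * (u i * u i) = 0 := by rw [← mul_assoc]; exact hi
        rcases mul_eq_zero.mp h2 with h' | h'
        · exact absurd h' hd
        · exact mul_self_eq_zero.mp h'
  -- injectivity of f
  have hinj : Function.Injective f := by
    rw [← LinearMap.ker_eq_bot, LinearMap.ker_eq_bot']
    intro c hc
    set u : Fin (n+2) → ℝ := fun i => c 0 * a i + c 1 * b i with hu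
    have hu0 : ∀ i, 0 < d i → u i = 0 := by
      intro i hi
      have := congrFun hc (⟨i, hi⟩ : K)
      simpa [f, hu] using this
    have hQu := (Qnonpos u hu0).1
    have hQu' : ∑ i, d i * u i * u i = (c 0 ^ 2 + c 1 ^ 2) * (t/2) := expand (c 0) (c 1)
    have hc2 : c 0 ^ 2 + c 1 ^ 2 ≤ 0 := by
      by_contra hcon
      push_neg at hcon
      nlinarith
    have h0 : c 0 = 0 ∧ c 1 = 0 := by
      constructor <;> nlinarith [sq_nonneg (c 0), sq_nonneg (c 1)]
    funext j
    fin_cases j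
    · exact h0.1
    · exact h0.2
  -- surjectivity of f
  have hsurj : Function.Surjective f := by
    have hrank : Module.finrank ℝ (Fin 2 → ℝ) = Module.finrank ℝ (K → ℝ) := by
      rw [Module.finrank_pi, Module.finrank_pi, hcardK, Fintype.card_fin]
    exact (LinearMap.injective_iff_surjective_of_finrank_eq_finrank hrank).mp hinj
  -- main argument
  obtain ⟨c, hc⟩ := hsurj (fun i : K => x i.1)
  set wv : Fin (n+2) → ℝ := fun i => c 0 * a i + c 1 * b i with hwv
  set u : Fin (n+2) → ℝ := fun i => x i - wv i with huv
  have hu0 : ∀ i, 0 < d i → u i = 0 := by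
    intro i hi
    have := congrFun hc (⟨i, hi⟩ : K)
    simp only [f, LinearMap.coe_mk, AddHom.coe_mk] at this
    simp [huv, hwv, this]
  have hQu := Qnonpos u hu0
  have hQw : ∑ i, d i * wv i * wv i = (c 0 ^ 2 + c 1 ^ 2) * (t/2) := expand (c 0) (c 1)
  have hBwx : ∑ i, d i * wv i * x i = 0 := by
    have : ∑ i, d i * wv i * x i
        = c 0 * (∑ i, d i * x i * a i) + c 1 * (∑ i, d i * x i * b i) := by
      simp only [Finset.mul_sum, ← Finset.sum_add_distrib]
      exact Finset.sum_congr rfl fun i _ => by simp only [hwv]; ring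
    rw [this, hxa, hxb]; ring
  have hid : ∑ i, d i * x i * x i
      = (∑ i, d i * u i * u i) - (∑ i, d i * wv i * wv i)
        + 2 * (∑ i, d i * wv i * x i) := by
    rw [Finset.mul_sum, ← Finset.sum_sub_distrib, ← Finset.sum_add_distrib]
    exact Finset.sum_congr rfl fun i _ => by simp only [huv]; ring
  have hQx : ∑ i, d i * x i * x i = (∑ i, d i * u i * u i) - (c 0 ^ 2 + c 1 ^ 2) * (t/2) := by
    rw [hid, hBwx, hQw]; ring
  have hc2 : 0 ≤ (c 0 ^ 2 + c 1 ^ 2) * (t/2) :=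
    mul_nonneg (by positivity) (by linarith)
  constructor
  · rw [hQx]; linarith [hQu.1]
  · intro h0
    rw [hQx] at h0
    have hz : (∑ i, d i * u i * u i) = 0 ∧ (c 0 ^ 2 + c 1 ^ 2) * (t/2) = 0 := by
      constructor <;> linarith [hQu.1]
    have hu' : u = 0 := hQu.2 hz.1
    have hc0 : c 0 = 0 ∧ c 1 = 0 := by
      have ht2 : (0:ℝ) < t/2 := by linarith
      have : c 0 ^ 2 + c 1 ^ 2 = 0 := by
        rcases mul_eq_zero.mp hz.2 with h | h
        · exact h
        · linarith
      constructor <;> nlinarith [sq_nonneg (c 0), sq_nonneg (c 1)]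
    funext i
    have hui := congrFun hu' i
    simp only [huv, Pi.zero_apply] at hui
    show x i = 0
    have : wv i = 0 := by simp [hwv, hc0.1, hc0.2]
    linarith [hui, this.symm ▸ hui]

open Matrix in
lemma cov {n : ℕ} (G : Matrix (Fin (n+2)) (Fin (n+2)) ℤ) (P : Matrix (Fin (n+2)) (Fin (n+2)) ℝ)
    (d : Fin (n+2) → ℝ)
    (hdiag : Pᵀ * G.map (Int.cast : ℤ → ℝ) * P = Matrix.diagonal d)
    (u v : Fin (n+2) → ℝ) :
    bR G (P *ᵥ u) (P *ᵥ v) = ∑ i, d i * u i * v i := by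
  have h1 : bR G (P *ᵥ u) (P *ᵥ v) = u ⬝ᵥ ((Pᵀ * G.map (Int.cast : ℤ → ℝ) * P) *ᵥ v) := by
    rw [bR, mulVec_mulVec, ← vecMul_transpose, ← dotProduct_mulVec, mulVec_mulVec,
      ← Matrix.mul_assoc]
  rw [h1, hdiag]
  simp only [dotProduct, Matrix.mulVec_diagonal]
  exact Finset.sum_congr rfl fun i _ => by ring

open Matrix in
lemma negdefR {n : ℕ} (G : Matrix (Fin (n+2)) (Fin (n+2)) ℤ)
    (hsig : HasSignature G 2 n) (a b : Fin (n+2) → ℝ) (t : ℝ) (ht : 0 < t)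
    (haa : bR G a a = t/2) (hbb : bR G b b = t/2) (hab : bR G a b = 0)
    (x : Fin (n+2) → ℝ) (hxa : bR G x a = 0) (hxb : bR G x b = 0) :
    bR G x x ≤ 0 ∧ (bR G x x = 0 → x = 0) := by
  obtain ⟨P, d, hP, hdiag, h2, hn⟩ := hsig
  haveI := P.invertibleOfIsUnitDet hP
  have hPv : ∀ v : Fin (n+2) → ℝ, P *ᵥ (P⁻¹ *ᵥ v) = v := by
    intro v
    rw [mulVec_mulVec, Matrix.mul_nonsing_inv _ hP, Matrix.one_mulVec]
  set a' := P⁻¹ *ᵥ a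
  set b' := P⁻¹ *ᵥ b
  set x' := P⁻¹ *ᵥ x
  have e : ∀ u v : Fin (n+2) → ℝ,
      bR G u v = ∑ i, d i * (P⁻¹ *ᵥ u) i * (P⁻¹ *ᵥ v) i := by
    intro u v
    rw [← cov G P d hdiag, hPv, hPv]
  rw [e x a] at hxa
  rw [e x b] at hxb
  rw [e a a] at haa
  rw [e b b] at hbb
  rw [e a b] at hab
  have hkey := key n d h2 hn a' b' t ht haa hbb hab x' hxa hxb
  rw [e x x]
  refine ⟨hkey.1, fun h0 => ?_⟩
  have hx' : x' = 0 := hkey.2 h0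
  have : P *ᵥ x' = x := hPv x
  rw [hx'] at this
  rw [← this, Matrix.mulVec_zero]


/-- **Lemma 2.2 (S_T_are_disjoint).** Let `L` be a lattice of signature `(2,n)`,
`w ∈ L⊗ℂ` with `(w,w) = 0`, `(w,w̄) > 0`, and let
`S = {x ∈ L : (x,w) = 0 and (x,w̄) = 0}`, `T = S^⊥ ∩ L`.  Then
`(S⊗ℂ) ∩ (T⊗ℂ) = {0}` inside `L⊗ℂ`. -/
theorem stmt_1 (n : ℕ) (G : Matrix (Fin (n + 2)) (Fin (n + 2)) ℤ)
    (hsym : G.IsSymm) (hdet : G.det ≠ 0) (hsig : HasSignature G 2 n)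
    (w : Fin (n + 2) → ℂ) (hww : bC G w w = 0)
    (hwwbar : ∃ t : ℝ, 0 < t ∧ bC G w (star w) = (t : ℂ))
    (S T : Set (Fin (n + 2) → ℤ))
    (hS : S = {x | bC G (toC _ x) w = 0 ∧ bC G (toC _ x) (star w) = 0})
    (hT : T = {x | ∀ s ∈ S, bZ G x s = 0}) :
    Submodule.span ℂ (⇑(toC (Fin (n + 2))) '' S) ⊓
      Submodule.span ℂ (⇑(toC (Fin (n + 2))) '' T) = ⊥ := by
  obtain ⟨t, ht, hwwbar'⟩ := hwwbar
  set a : Fin (n + 2) → ℝ := fun i => (w i).re with ha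
  set b : Fin (n + 2) → ℝ := fun i => (w i).im with hb
  have hw : w = cplx a + Complex.I • cplx b := decompC w
  have hws : star w = cplx a - Complex.I • cplx b := starC w
  -- properties of a, b
  have h1 : bR G a a - bR G b b = 0 ∧ bR G a b + bR G b a = 0 := by
    rw [hw, bC_expand1] at hww
    have := reim_eq _ _ 0 (by rw [hww]; simp)
    exact ⟨this.1, this.2⟩
  have h2 : bR G a a + bR G b b = t ∧ - bR G a b + bR G b a = 0 := by
    rw [hws, hw, bC_expand2] at hwwbar'
    exact reim_eq _ _ t hwwbar'
  have hba : bR G b a = bR G a b := bR_symm G hsym b a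
  have haa : bR G a a = t / 2 := by
    have := h1.1; have := h2.1; linarith
  have hbb : bR G b b = t / 2 := by
    have := h1.1; have := h2.1; linarith
  have hab : bR G a b = 0 := by
    have := h1.2; linarith [hba]
  -- negative definiteness on the orthogonal complement of a, b
  have negdef : ∀ x : Fin (n+2) → ℝ, bR G x a = 0 → bR G x b = 0 →
      bR G x x ≤ 0 ∧ (bR G x x = 0 → x = 0) :=
    fun x hxa hxb => negdefR G hsig a b t ht haa hbb hab x hxa hxb
  -- now the span argument
  rw [eq_bot_iff]
  intro v hv
  rw [Submodule.mem_inf] at hv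
  obtain ⟨hvS, hvT⟩ := hv
  rw [Submodule.mem_bot]
  -- v is orthogonal to w and star w
  have hvw : bC G v w = 0 ∧ bC G v (star w) = 0 := by
    refine Submodule.span_induction (p := fun u _ => bC G u w = 0 ∧ bC G u (star w) = 0)
      ?_ ?_ ?_ ?_ hvS
    · rintro u ⟨s, hs, rfl⟩
      rw [hS] at hs
      exact hs
    · constructor <;> simp [bC, zero_dotProduct]
    · intro u u' _ _ hu hu'
      rw [bC_add_left, bC_add_left, hu.1, hu'.1, hu.2, hu'.2]
      simp
    · intro c u _ hu
      rw [bC_smul_left, bC_smul_left, hu.1, hu.2]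
      simp
  -- star v is in the span of S
  have hstar : star v ∈ Submodule.span ℂ (⇑(toC (Fin (n + 2))) '' S) := by
    refine Submodule.span_induction
      (p := fun u _ => star u ∈ Submodule.span ℂ (⇑(toC (Fin (n + 2))) '' S)) ?_ ?_ ?_ ?_ hvS
    · rintro u ⟨s, hs, rfl⟩
      have : star (toC (Fin (n+2)) s) = toC (Fin (n+2)) s := by
        funext i
        simp [toC, Complex.star_def]
      rw [this]
      exact Submodule.subset_span ⟨s, hs, rfl⟩
    · simp
    · intro u u' _ _ hu hu'
      rw [star_add]
      exact Submodule.add_mem _ hu hu'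
    · intro c u _ hu
      rw [star_smul]
      exact Submodule.smul_mem _ _ hu
  -- pairing between span T and span S vanishes
  have hpair : ∀ u ∈ Submodule.span ℂ (⇑(toC (Fin (n + 2))) '' T),
      ∀ u' ∈ Submodule.span ℂ (⇑(toC (Fin (n + 2))) '' S), bC G u u' = 0 := by
    intro u hu
    refine Submodule.span_induction
      (p := fun u _ => ∀ u' ∈ Submodule.span ℂ (⇑(toC (Fin (n + 2))) '' S), bC G u u' = 0)
      ?_ ?_ ?_ ?_ hu
    · rintro z ⟨tt, htt, rfl⟩ u' hu'
      refine Submodule.span_induction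
        (p := fun u' _ => bC G (toC (Fin (n+2)) tt) u' = 0) ?_ ?_ ?_ ?_ hu'
      · rintro z' ⟨s, hs, rfl⟩
        rw [bC_toC]
        rw [hT] at htt
        rw [htt s hs]
        simp
      · simp [bC, Matrix.mulVec_zero, dotProduct_zero]
      · intro y y' _ _ hy hy'
        rw [bC_add_right, hy, hy']; simp
      · intro c y _ hy
        rw [bC_smul_right, hy]; simp
    · intro u' _
      simp [bC, zero_dotProduct]
    · intro y y' _ _ hy hy' u' hu'
      rw [bC_add_left, hy u' hu', hy' u' hu']; simp
    · intro c y _ hy u' hu'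
      rw [bC_smul_left, hy u' hu']; simp
  have hvv : bC G v (star v) = 0 := hpair v hvT (star v) hstar
  -- decompose v
  set p : Fin (n + 2) → ℝ := fun i => (v i).re with hp
  set q : Fin (n + 2) → ℝ := fun i => (v i).im with hq
  have hdv : v = cplx p + Complex.I • cplx q := decompC v
  have hsv : star v = cplx p - Complex.I • cplx q := starC v
  -- orthogonality of p, q to a, b
  have e1 : bR G p a - bR G q b = 0 ∧ bR G p b + bR G q a = 0 := by
    have := hvw.1
    rw [hdv, hw, bC_expand1] at this
    have := reim_eq _ _ 0 (by rw [this]; simp)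
    exact this
  have e2 : bR G p a + bR G q b = 0 ∧ - bR G p b + bR G q a = 0 := by
    have := hvw.2
    rw [hws, hdv, bC_expand2] at this
    have := reim_eq _ _ 0 (by rw [this]; simp)
    exact this
  have hpa : bR G p a = 0 := by linarith [e1.1, e2.1]
  have hqb : bR G q b = 0 := by linarith [e1.1, e2.1]
  have hpb : bR G p b = 0 := by linarith [e1.2, e2.2]
  have hqa : bR G q a = 0 := by linarith [e1.2, e2.2]
  -- the norm of v
  have e3 : bR G p p + bR G q q = 0 := by
    rw [hsv, hdv, bC_expand2] at hvv
    exact (reim_eq _ _ 0 (by rw [hvv]; simp)).1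
  have hpn := negdef p hpa hpb
  have hqn := negdef q hqa hqb
  have hp0 : p = 0 := hpn.2 (by linarith [hpn.1, hqn.1])
  have hq0 : q = 0 := hqn.2 (by linarith [hpn.1, hqn.1])
  rw [hdv, hp0, hq0]
  funext i
  simp [cplx]


end A0607339
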